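/- Let B be a unital C*-algebra and M a maximal abelian *-subalgebra of B. Let P ⊆ B_sa be a set invariant under all unitary conjugations (uPu* = P for every unitary u ∈ B). If Q ⊆ P ∩ M_sa has a least upper bound q within P, then q ∈ M. -/

import Mathlib

/-- `S` is a (not necessarily unital) star-subalgebra of `B`, viewed as a set. -/
def IsStarSubalgSet {B : Type*} [NonUnitalNormedRing B] [StarRing B] [Module ℂ B]
    (S : Set B) : Prop :=
  (0 : B) ∈ S ∧ (∀ x ∈ S, ∀ y ∈ S, x + y ∈ S) ∧ (∀ (c : ℂ), ∀ x ∈ S, c • x ∈ S) ∧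
    (∀ x ∈ S, ∀ y ∈ S, x * y ∈ S) ∧ (∀ x ∈ S, star x ∈ S)

/-- `S` is a maximal abelian star-subalgebra of `B`. -/
def IsMasa {B : Type*} [NonUnitalNormedRing B] [StarRing B] [Module ℂ B]
    (S : Set B) : Prop :=
  IsStarSubalgSet S ∧ (∀ x ∈ S, ∀ y ∈ S, x * y = y * x) ∧
    ∀ T : Set B, IsStarSubalgSet T → (∀ x ∈ T, ∀ y ∈ T, x * y = y * x) → S ⊆ T → T = S

open NormedSpace

/-- Restriction of a complex derivative to the reals. -/
theorem hasDerivAt_comp_ofReal_aux {E : Type*} [NormedAddCommGroup E] [NormedSpace ℂ E]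
    {f : ℂ → E} {f' : E} {z : ℝ} (hf : HasDerivAt f f' z) :
    HasDerivAt (fun t : ℝ => f t) f' z := by
  simpa [Function.comp_def] using ((hf.hasFDerivAt.restrictScalars ℝ).comp z
    Complex.ofRealCLM.hasFDerivAt).hasDerivAt

/-- Let `B` be a unital C*-algebra and `M` a m.a.s.a. in `B`.  Let `P` be a set of
self-adjoint elements invariant under all unitary conjugations.  If `Q ⊆ P ∩ M_sa` has a
least upper bound `q` within `P`, then `q ∈ M`. -/
theorem lub_within_invariant_set_mem_masa {B : Type*} [NormedRing B] [StarRing B]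
    [CStarRing B] [CompleteSpace B] [NormedAlgebra ℂ B] [StarModule ℂ B]
    [PartialOrder B] [StarOrderedRing B]
    (M : Set B) (hM : IsMasa M) (h1 : (1 : B) ∈ M)
    (P : Set B) (hPsa : ∀ x ∈ P, star x = x)
    (hPinv : ∀ u : B, star u * u = 1 → u * star u = 1 →
      (fun x => u * x * star u) '' P = P)
    (Q : Set B) (hQP : Q ⊆ P) (hQM : Q ⊆ M)
    (q : B) (hqP : q ∈ P) (hub : ∀ x ∈ Q, x ≤ q)
    (hlub : ∀ p ∈ P, (∀ x ∈ Q, x ≤ p) → q ≤ p) :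
    q ∈ M := by
  obtain ⟨⟨hM0, hMadd, hMsmul, hMmul, hMstar⟩, hMcomm, hMmax⟩ := hM
  -- `M` as a star subalgebra
  let S : StarSubalgebra ℂ B :=
    { carrier := M
      mul_mem' := fun {a b : B} ha hb => hMmul a ha b hb
      add_mem' := fun {a b : B} ha hb => hMadd a ha b hb
      one_mem' := h1
      zero_mem' := hM0
      algebraMap_mem' := fun c => by
        simpa [Algebra.algebraMap_eq_smul_one] using hMsmul c 1 h1
      star_mem' := fun {a : B} ha => hMstar a ha }
  -- `M` is closed
  letI : CommSemiring S.topologicalClosure :=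
    S.commSemiringTopologicalClosure fun ⟨x, hx⟩ ⟨y, hy⟩ => Subtype.ext (hMcomm x hx y hy)
  have hScM : (S.topologicalClosure : Set B) = M := by
    refine hMmax _ ?_ ?_ S.le_topologicalClosure
    · exact ⟨zero_mem _, fun x hx y hy => add_mem hx hy,
        fun c x hx => SMulMemClass.smul_mem c hx,
        fun x hx y hy => mul_mem hx hy, fun x hx => star_mem hx⟩
    · exact fun x hx y hy =>
        Subtype.ext_iff.mp (mul_comm (⟨x, hx⟩ : S.topologicalClosure) ⟨y, hy⟩)
  have hMclosed : IsClosed M := hScM ▸ S.isClosed_topologicalClosure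
  -- exponentials of elements of `M` stay in `M`
  have hexp : ∀ z ∈ M, exp z ∈ M := by
    intro z hz
    have hpow : ∀ n : ℕ, z ^ n ∈ M := by
      intro n
      induction n with
      | zero => simpa using h1
      | succ n ih => rw [pow_succ]; exact hMmul _ ih _ hz
    refine hMclosed.mem_of_tendsto (expSeries_hasSum_exp (𝕂 := ℂ) (x := z))
      (Filter.Eventually.of_forall fun s => ?_)
    refine Finset.sum_induction _ (· ∈ M) (fun a b ha hb => hMadd _ ha _ hb) hM0 ?_
    intro n _
    rw [expSeries_apply_eq]
    exact hMsmul _ _ (hpow n)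
  -- conjugating `q` by a unitary of `M` dominates `q`
  have hle : ∀ v : B, v ∈ M → star v * v = 1 → v * star v = 1 → q ≤ v * q * star v := by
    intro v hvM hv1 hv2
    have hvP : v * q * star v ∈ P := by
      rw [← hPinv v hv1 hv2]
      exact ⟨q, hqP, rfl⟩
    refine hlub _ hvP fun y hy => ?_
    have h1' := star_left_conjugate_le_conjugate (hub y hy) (star v)
    rw [star_star] at h1'
    have hyv : v * y * star v = y := by
      rw [hMcomm v hvM y (hQM hy), mul_assoc, hv2, mul_one]
    rwa [hyv] at h1'
  -- conjugation by a unitary of `M` fixes `q`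
  have hconj : ∀ v : B, v ∈ M → star v * v = 1 → v * star v = 1 → v * q = q * v := by
    intro v hvM hv1 hv2
    have h1' := hle v hvM hv1 hv2
    have h2' := hle (star v) (hMstar _ hvM) (by rwa [star_star]) (by rwa [star_star])
    rw [star_star] at h2'
    have h3' := star_left_conjugate_le_conjugate h2' (star v)
    rw [star_star] at h3'
    have : v * (star v * q * v) * star v = q := by
      calc v * (star v * q * v) * star v = (v * star v) * q * (v * star v) := by
            noncomm_ring
      _ = q := by rw [hv2, one_mul, mul_one]
    rw [this] at h3'
    have heq : v * q * star v = q := le_antisymm h3' h1'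
    calc v * q = v * q * (star v * v) := by rw [hv1, mul_one]
      _ = (v * q * star v) * v := by noncomm_ring
      _ = q * v := by rw [heq]
  -- `q` commutes with selfadjoint elements of `M`
  have key : ∀ a ∈ M, star a = a → a * q = q * a := by
    intro a haM hasa
    set x := Complex.I • a with hxdef
    have hxM : x ∈ M := hMsmul _ _ haM
    have hxstar : star x = -x := by
      simp [hxdef, star_smul, hasa, Complex.conj_I, neg_smul]
    have hstaru : ∀ t : ℝ, star (exp ((t : ℂ) • x)) = exp (-((t : ℂ) • x)) := by
      intro t
      rw [star_exp, star_smul, hxstar, smul_neg]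
      norm_num
    have huni : ∀ t : ℝ, star (exp ((t : ℂ) • x)) * exp ((t : ℂ) • x) = 1 ∧
        exp ((t : ℂ) • x) * star (exp ((t : ℂ) • x)) = 1 := by
      intro t
      letI : NormedAlgebra ℚ B := .restrictScalars ℚ ℂ B
      constructor
      · rw [hstaru t, ← exp_add_of_commute ((Commute.refl _).neg_left), neg_add_cancel, exp_zero]
      · rw [hstaru t, ← exp_add_of_commute ((Commute.refl _).neg_right), add_neg_cancel, exp_zero]
    have hcommt : ∀ t : ℝ, exp ((t : ℂ) • x) * q = q * exp ((t : ℂ) • x) := by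
      intro t
      exact hconj _ (hexp _ (hMsmul _ _ hxM)) (huni t).1 (huni t).2
    have hd1 : HasDerivAt (fun t : ℝ => exp ((t : ℂ) • x)) x 0 := by
      have h := hasDerivAt_exp_smul_const (𝕂 := ℂ) x (0 : ℂ)
      rw [zero_smul, exp_zero, one_mul] at h
      exact_mod_cast hasDerivAt_comp_ofReal_aux h
    have h2 : HasDerivAt (fun t : ℝ => exp ((t : ℂ) • x) * q) (x * q) 0 := hd1.mul_const q
    have h3 : HasDerivAt (fun t : ℝ => exp ((t : ℂ) • x) * q) (q * x) 0 := by
      have : (fun t : ℝ => exp ((t : ℂ) • x) * q) =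
          (fun t : ℝ => q * exp ((t : ℂ) • x)) := funext fun t => hcommt t
      rw [this]
      exact hd1.const_mul q
    have hxq : x * q = q * x := h2.unique h3
    have : Complex.I • (a * q) = Complex.I • (q * a) := by
      simpa [hxdef, smul_mul_assoc, mul_smul_comm] using hxq
    exact smul_right_injective B Complex.I_ne_zero this
  -- `q` commutes with everything in `M`
  have keyall : ∀ m ∈ M, m * q = q * m := by
    intro m hm
    obtain ⟨a, hadef⟩ : ∃ a : B, a = (2⁻¹ : ℂ) • (m + star m) := ⟨_, rfl⟩
    obtain ⟨b, hbdef⟩ : ∃ b : B, b = (-Complex.I * 2⁻¹) • (m - star m) := ⟨_, rfl⟩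
    have haM : a ∈ M := hadef ▸ hMsmul _ _ (hMadd _ hm _ (hMstar _ hm))
    have hbM : b ∈ M := hbdef ▸ hMsmul _ _ (by
      have := hMadd _ hm _ (hMsmul (-1 : ℂ) _ (hMstar _ hm))
      simpa [sub_eq_add_neg, neg_one_smul] using this)
    have hasa : star a = a := by
      simp [hadef, star_smul, add_comm]
    have hbsa : star b = b := by
      rw [hbdef, star_smul, star_sub, star_star,
        show star m - m = -(m - star m) from (neg_sub _ _).symm, smul_neg, ← neg_smul]
      congr 1
      simp [Complex.conj_I]
    have hm_eq : m = a + Complex.I • b := by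
      rw [hadef, hbdef]
      match_scalars <;> (ring_nf; simp [Complex.I_sq]; try norm_num)
    have hqa := key a haM hasa
    have hqb := key b hbM hbsa
    calc m * q = (a + Complex.I • b) * q := by rw [← hm_eq]
      _ = a * q + Complex.I • (b * q) := by rw [add_mul, smul_mul_assoc]
      _ = q * a + Complex.I • (q * b) := by rw [hqa, hqb]
      _ = q * (a + Complex.I • b) := by rw [mul_add, mul_smul_comm]
      _ = q * m := by rw [← hm_eq]
  -- conclude by maximality
  have hqsa : star q = q := hPsa q hqP
  have hcomm' : ∀ a ∈ insert q M, ∀ b ∈ insert q M, a * b = b * a := by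
    intro a ha b hb
    rcases Set.mem_insert_iff.mp ha with h1 | h1 <;>
      rcases Set.mem_insert_iff.mp hb with h2 | h2
    · rw [h1, h2]
    · rw [h1]; exact (keyall b h2).symm
    · rw [h2]; exact keyall a h1
    · exact hMcomm a h1 b h2
  have hcommstar : ∀ a ∈ insert q M, ∀ b ∈ insert q M, a * star b = star b * a := by
    intro a ha b hb
    rcases Set.mem_insert_iff.mp hb with h2 | h2
    · rw [h2, hqsa]; exact hcomm' a ha q (Set.mem_insert _ _)
    · exact hcomm' a ha (star b) (Set.mem_insert_of_mem _ (hMstar _ h2))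
  letI : CommSemiring (StarAlgebra.adjoin ℂ (insert q M)) :=
    StarAlgebra.adjoinCommSemiringOfComm ℂ hcomm' hcommstar
  have hTsub : IsStarSubalgSet ((StarAlgebra.adjoin ℂ (insert q M) : StarSubalgebra ℂ B) : Set B) :=
    ⟨zero_mem _, fun x hx y hy => add_mem hx hy,
      fun c x hx => SMulMemClass.smul_mem c hx,
      fun x hx y hy => mul_mem hx hy, fun x hx => star_mem hx⟩
  have hTcomm : ∀ x ∈ ((StarAlgebra.adjoin ℂ (insert q M) : StarSubalgebra ℂ B) : Set B),
      ∀ y ∈ ((StarAlgebra.adjoin ℂ (insert q M) : StarSubalgebra ℂ B) : Set B), x * y = y * x :=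
    fun x hx y hy =>
      Subtype.ext_iff.mp (mul_comm (⟨x, hx⟩ : StarAlgebra.adjoin ℂ (insert q M)) ⟨y, hy⟩)
  have hMT : M ⊆ ((StarAlgebra.adjoin ℂ (insert q M) : StarSubalgebra ℂ B) : Set B) :=
    fun m hm => StarAlgebra.subset_adjoin ℂ _ (Set.mem_insert_of_mem _ hm)
  have hTM := hMmax _ hTsub hTcomm hMT
  rw [← hTM]
  exact StarAlgebra.subset_adjoin ℂ _ (Set.mem_insert _ _)
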